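/- Let v: ℝ → ℝ be positive, 2π-periodic, and C⁴, satisfying v'''' + 10v'' + 9v = τ v^{-5/3} with τ > 0, and set w = v^{1/3}. Then w(θ)⁵(w''(θ) + w(θ)) = w(θ+π)⁵(w''(θ+π) + w(θ+π)) for all θ. -/

import Mathlib

open Real

lemma my_const_of_hasDerivAt {f : ℝ → ℝ} (h : ∀ x, HasDerivAt f 0 x) (x y : ℝ) : f x = f y :=
  is_const_of_deriv_eq_zero (fun z => (h z).differentiableAt) (fun z => (h z).deriv) x y

lemma my_osc {f g : ℝ → ℝ} (hfg : ∀ x, HasDerivAt f (g x) x)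
    (hgf : ∀ x, HasDerivAt g (-4 * f x) x) (x : ℝ) : f (x + π) = f x := by
  set h : ℝ → ℝ := fun t => f t - f 0 * Real.cos (2*t) - g 0 / 2 * Real.sin (2*t) with hh
  set k : ℝ → ℝ := fun t => g t + 2 * f 0 * Real.sin (2*t) - g 0 * Real.cos (2*t) with hk
  have h2t : ∀ t : ℝ, HasDerivAt (fun t : ℝ => 2*t) 2 t := by
    intro t; simpa using (hasDerivAt_id t).const_mul (2:ℝ)
  have hcos : ∀ t : ℝ, HasDerivAt (fun t => Real.cos (2*t)) (-Real.sin (2*t) * 2) t :=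
    fun t => (Real.hasDerivAt_cos (2*t)).comp t (h2t t)
  have hsin : ∀ t : ℝ, HasDerivAt (fun t => Real.sin (2*t)) (Real.cos (2*t) * 2) t :=
    fun t => (Real.hasDerivAt_sin (2*t)).comp t (h2t t)
  have hdh : ∀ t, HasDerivAt h (k t) t := by
    intro t
    have := ((hfg t).sub (((hcos t).const_mul (f 0)))).sub ((hsin t).const_mul (g 0 / 2))
    refine this.congr_deriv ?_
    simp only [hk]; ring
  have hdk : ∀ t, HasDerivAt k (-4 * h t) t := by
    intro t
    have := ((hgf t).add ((hsin t).const_mul (2 * f 0))).sub ((hcos t).const_mul (g 0))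
    refine this.congr_deriv ?_
    simp only [hh]; ring
  have hW : ∀ t, HasDerivAt (fun t => 4 * h t^2 + k t^2) 0 t := by
    intro t
    have := ((((hdh t).pow 2).const_mul 4)).add ((hdk t).pow 2)
    refine this.congr_deriv ?_
    ring
  have hW0 : ∀ t, 4 * h t^2 + k t^2 = 0 := by
    intro t
    have := my_const_of_hasDerivAt hW t 0
    rw [this]
    simp [hh, hk]
  have hz : ∀ t, h t = 0 := by
    intro t; nlinarith [hW0 t, sq_nonneg (h t), sq_nonneg (k t)]
  have hf : ∀ t, f t = f 0 * Real.cos (2*t) + g 0 / 2 * Real.sin (2*t) := by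
    intro t; have := hz t; simp only [hh] at this; linarith
  rw [hf x, hf (x + π)]
  have e1 : 2*(x+π) = 2*x + 2*π := by ring
  rw [e1, Real.cos_add_two_pi, Real.sin_add_two_pi]

theorem stmt14 (v : ℝ → ℝ) (hv : ContDiff ℝ 4 v) (hpos : ∀ θ, 0 < v θ)
    (hper : Function.Periodic v (2 * Real.pi)) (τ : ℝ) (hτ : 0 < τ)
    (hODE : ∀ θ, iteratedDeriv 4 v θ + 10 * iteratedDeriv 2 v θ + 9 * v θ
        = τ * v θ ^ (-(5:ℝ)/3))
    (w : ℝ → ℝ) (hw : ∀ θ, w θ = v θ ^ ((1:ℝ)/3)) :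
    ∀ θ : ℝ, (w θ)^5 * (iteratedDeriv 2 w θ + w θ)
      = (w (θ + Real.pi))^5 * (iteratedDeriv 2 w (θ + Real.pi) + w (θ + Real.pi)) := by
  set v1 := deriv v with hv1
  set v2 := deriv v1 with hv2
  set v3 := deriv v2 with hv3
  set v4 := deriv v3 with hv4
  -- regularity
  have c1 : ContDiff ℝ 3 v1 := by
    have h : ContDiff ℝ ((3:ℕ∞)+1) v := by exact_mod_cast hv
    exact_mod_cast (contDiff_succ_iff_deriv.mp h).2.2
  have c2 : ContDiff ℝ 2 v2 := by
    have h : ContDiff ℝ ((2:ℕ∞)+1) v1 := by exact_mod_cast c1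
    exact_mod_cast (contDiff_succ_iff_deriv.mp h).2.2
  have c3 : ContDiff ℝ 1 v3 := by
    have h : ContDiff ℝ ((1:ℕ∞)+1) v2 := by exact_mod_cast c2
    exact_mod_cast (contDiff_succ_iff_deriv.mp h).2.2
  have d0 : ∀ x, HasDerivAt v (v1 x) x := fun x =>
    (hv.differentiable (by norm_num) x).hasDerivAt
  have d1 : ∀ x, HasDerivAt v1 (v2 x) x := fun x =>
    (c1.differentiable (by norm_num) x).hasDerivAt
  have d2 : ∀ x, HasDerivAt v2 (v3 x) x := fun x =>
    (c2.differentiable (by norm_num) x).hasDerivAt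
  have d3 : ∀ x, HasDerivAt v3 (v4 x) x := fun x =>
    (c3.differentiable (by norm_num) x).hasDerivAt
  -- rewrite ODE
  have hODE' : ∀ x, v4 x + 10 * v2 x + 9 * v x = τ * v x ^ (-(5:ℝ)/3) := by
    intro x
    have := hODE x
    simpa [iteratedDeriv_succ, iteratedDeriv_zero, hv1, hv2, hv3, hv4] using this
  have hvv : ∀ x, v x * v x ^ (-(5:ℝ)/3) = v x ^ (-(2:ℝ)/3) := by
    intro x
    nth_rewrite 1 [← Real.rpow_one (v x)]
    rw [← Real.rpow_add (hpos x)]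
    norm_num
  -- conserved quantity N = A'' + 4A
  set N : ℝ → ℝ := fun x => (2/9)*v1 x*v3 x - (1/9)*(v2 x)^2 + (10/9)*(v1 x)^2
      + (v x)^2 + (τ/3)*(v x) ^ (-(2:ℝ)/3) with hN
  have hrw : ∀ x : ℝ, (v x) ^ (-(2:ℝ)/3 - 1) = (v x) ^ (-(5:ℝ)/3) := by
    intro x; norm_num
  have hNd : ∀ x, HasDerivAt N 0 x := by
    intro x
    have hp : HasDerivAt (fun y => v y ^ (-(2:ℝ)/3))
        (v1 x * (-(2:ℝ)/3) * v x ^ (-(2:ℝ)/3 - 1)) x :=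
      (d0 x).rpow_const (Or.inl (hpos x).ne')
    rw [hrw x] at hp
    have H := ((((((d1 x).const_mul (2/9:ℝ)).mul (d3 x)).sub
        (((d2 x).pow 2).const_mul (1/9))).add
        (((d1 x).pow 2).const_mul (10/9))).add ((d0 x).pow 2)).add (hp.const_mul (τ/3))
    simp only [hN]
    refine H.congr_deriv ?_
    have hv4x : v4 x = τ * v x ^ (-(5:ℝ)/3) - 10 * v2 x - 9 * v x := by
      linarith [hODE' x]
    rw [hv4x]
    push_cast
    ring
  -- the function A = w^5 (w'' + w)
  set A : ℝ → ℝ := fun x => (v x)^2 - (2/9)*(v1 x)^2 + (1/3)*(v x)*(v2 x) with hA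
  set A1 : ℝ → ℝ := fun x => 2*(v x)*(v1 x) - (1/9)*(v1 x)*(v2 x) + (1/3)*(v x)*(v3 x) with hA1
  have hAd : ∀ x, HasDerivAt A (A1 x) x := by
    intro x
    have H := (((d0 x).pow 2).sub (((d1 x).pow 2).const_mul (2/9))).add
      (((d0 x).const_mul (1/3:ℝ)).mul (d2 x))
    simp only [hA]
    refine H.congr_deriv ?_
    simp only [hA1]
    push_cast
    ring
  have hA1d : ∀ x, HasDerivAt A1 (N x - 4 * A x) x := by
    intro x
    have H := ((((d0 x).const_mul (2:ℝ)).mul (d1 x)).sub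
        (((d1 x).const_mul (1/9:ℝ)).mul (d2 x))).add
        (((d0 x).const_mul (1/3:ℝ)).mul (d3 x))
    simp only [hA1]
    refine H.congr_deriv ?_
    have hv4x : v4 x = τ * v x ^ (-(5:ℝ)/3) - 10 * v2 x - 9 * v x := by
      linarith [hODE' x]
    simp only [hN, hA]
    rw [hv4x]
    linear_combination (τ/3) * hvv x
  -- A'' + 4A = N 0, so A is π-periodic by the oscillator lemma
  have hNc : ∀ x, N x = N 0 := fun x => my_const_of_hasDerivAt hNd x 0
  have hAper : ∀ x, A (x + π) = A x := by
    intro x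
    have key := my_osc (f := fun y => A y - N 0 / 4) (g := A1)
      (fun y => (hAd y).sub_const _)
      (fun y => by
        have := hA1d y
        rw [hNc y] at this
        convert this using 1
        ring) x
    simpa using key
  -- identify w^5 (w'' + w) with A
  have hwf : w = fun y => v y ^ ((1:ℝ)/3) := funext hw
  set w1 : ℝ → ℝ := fun x => v1 x * ((1:ℝ)/3) * v x ^ ((1:ℝ)/3 - 1) with hw1
  set w2 : ℝ → ℝ := fun x => v2 x * ((1:ℝ)/3) * v x ^ ((1:ℝ)/3 - 1)
      + v1 x * ((1:ℝ)/3) * (v1 x * ((1:ℝ)/3 - 1) * v x ^ ((1:ℝ)/3 - 1 - 1)) with hw2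
  have hwd : ∀ x, HasDerivAt w (w1 x) x := by
    intro x
    rw [hwf]
    exact (d0 x).rpow_const (Or.inl (hpos x).ne')
  have hderivw : deriv w = w1 := funext fun x => (hwd x).deriv
  have hw1d : ∀ x, HasDerivAt w1 (w2 x) x := by
    intro x
    have H := ((d1 x).mul_const ((1:ℝ)/3)).mul
      ((d0 x).rpow_const (p := (1:ℝ)/3 - 1) (Or.inl (hpos x).ne'))
    simp only [hw1]
    exact H
  have hit2 : ∀ x, iteratedDeriv 2 w x = w2 x := by
    intro x
    rw [show (2:ℕ) = 1 + 1 from rfl, iteratedDeriv_succ, iteratedDeriv_one, hderivw]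
    exact (hw1d x).deriv
  have hmain : ∀ θ : ℝ, (w θ)^5 * (iteratedDeriv 2 w θ + w θ) = A θ := by
    intro θ
    have ht : (0:ℝ) < v θ := hpos θ
    rw [hit2 θ, hw θ]
    have e1 : (v θ ^ ((1:ℝ)/3))^5 = v θ ^ ((5:ℝ)/3) := by
      rw [← Real.rpow_natCast (v θ ^ ((1:ℝ)/3)) 5, ← Real.rpow_mul ht.le]
      norm_num
    have e2 : v θ ^ ((5:ℝ)/3) * v θ ^ ((1:ℝ)/3 - 1) = v θ := by
      rw [← Real.rpow_add ht, show (5:ℝ)/3 + ((1:ℝ)/3 - 1) = 1 by norm_num, Real.rpow_one]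
    have e3 : v θ ^ ((5:ℝ)/3) * v θ ^ ((1:ℝ)/3 - 1 - 1) = 1 := by
      rw [← Real.rpow_add ht, show (5:ℝ)/3 + ((1:ℝ)/3 - 1 - 1) = 0 by norm_num, Real.rpow_zero]
    have e4 : v θ ^ ((5:ℝ)/3) * v θ ^ ((1:ℝ)/3) = (v θ)^2 := by
      rw [← Real.rpow_add ht, show (5:ℝ)/3 + (1:ℝ)/3 = ((2:ℕ):ℝ) by norm_num,
        Real.rpow_natCast]
    rw [e1]
    simp only [hw2, hA]
    linear_combination (1/3 * v2 θ) * e2 + (1/3 * ((1:ℝ)/3 - 1) * (v1 θ)^2) * e3 + e4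
  intro θ
  rw [hmain θ, hmain (θ + Real.pi), hAper θ]
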